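/- If R is a finite commutative ring and Γ_E(R) is a fan graph with at least four vertices, then R is a local ring. -/

import Mathlib

open scoped Classical

noncomputable section

/-- The annihilator ideal of an element `x` of a commutative ring `R`. -/
def ann (R : Type*) [CommRing R] (x : R) : Ideal R := Ideal.torsionOf R R x

/-- The type of nonzero zero divisors of `R`. -/
def ZD (R : Type*) [CommRing R] : Type _ :=
  {x : R // x ≠ 0 ∧ ∃ y : R, y ≠ 0 ∧ x * y = 0}

/-- Two zero divisors are equivalent iff they have the same annihilator. -/
instance annSetoid (R : Type*) [CommRing R] : Setoid (ZD R) :=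
  ⟨fun a b => ann R a.1 = ann R b.1,
   fun _ => rfl, Eq.symm, Eq.trans⟩

/-- The vertex set of `Γ_E(R)`: equivalence classes of nonzero zero divisors. -/
def GammaEV (R : Type*) [CommRing R] : Type _ := Quotient (annSetoid R)

/-- The class of a nonzero zero divisor. -/
def cls (R : Type*) [CommRing R] (a : ZD R) : GammaEV R :=
  Quotient.mk (annSetoid R) a

/-- The graph `Γ_E(R)` of equivalence classes of zero divisors. -/
def gammaE (R : Type*) [CommRing R] : SimpleGraph (GammaEV R) where
  Adj u v := u ≠ v ∧ ∃ a b : ZD R, cls R a = u ∧ cls R b = v ∧ a.1 * b.1 = 0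
  symm := by
    constructor
    rintro u v ⟨huv, a, b, ha, hb, hab⟩
    exact ⟨huv.symm, b, a, hb, ha, by rwa [mul_comm] at hab⟩
  loopless := by constructor; rintro u ⟨h, -⟩; exact h rfl

/-- `I` is a maximal element of the family `F = {ann x : 0 ≠ x ∈ R}`. -/
def MaxAnn (R : Type*) [CommRing R] (I : Ideal R) : Prop :=
  (∃ x : R, x ≠ 0 ∧ I = ann R x) ∧
    ∀ y : R, y ≠ 0 → I ≤ ann R y → I = ann R y

lemma mem_ann_iff {R : Type*} [CommRing R] {t x : R} : t ∈ ann R x ↔ t * x = 0 := by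
  simp [ann, Ideal.mem_torsionOf_iff, smul_eq_mul]

lemma cls_eq_iff {R : Type*} [CommRing R] {a b : ZD R} :
    cls R a = cls R b ↔ ann R a.1 = ann R b.1 :=
  ⟨Quotient.exact, fun h => Quotient.sound (a := a) (b := b) h⟩

/-- In a finite commutative monoid, some positive power of any element is idempotent. -/
lemma exists_idem_pow {M : Type*} [CommMonoid M] [Finite M] (a : M) :
    ∃ n, 1 ≤ n ∧ a ^ n * a ^ n = a ^ n := by
  obtain ⟨i, j, hne, hij⟩ := Finite.exists_ne_map_eq_of_infinite (fun n : ℕ => a ^ (n + 1))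
  wlog hlt : i < j generalizing i j
  · exact this j i hne.symm hij.symm (by omega)
  set m := i + 1 with hm
  set k := j - i with hk
  have hk1 : 1 ≤ k := by omega
  have hbase : a ^ m = a ^ (m + k) := by rw [hij]; congr 1; omega
  have step : ∀ s, m ≤ s → a ^ s = a ^ (s + k) := by
    intro s hs
    have : a ^ s = a ^ m * a ^ (s - m) := by rw [← pow_add]; congr 1; omega
    rw [this, hbase, ← pow_add]; congr 1; omega
  have claim : ∀ t s, m ≤ s → a ^ s = a ^ (s + t * k) := by
    intro t
    induction t with
    | zero => intro s _; simp
    | succ t ih =>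
      intro s hs
      rw [ih s hs, step (s + t * k) (by omega)]
      congr 1; ring
  refine ⟨m * k, Nat.one_le_iff_ne_zero.mpr (by positivity), ?_⟩
  rw [← pow_add]
  exact (claim m (m * k) (Nat.le_mul_of_pos_right m hk1)).symm

/-- Key classification lemma: if `f` is a nonzero idempotent, the class containing
elements with annihilator `ann f` is the center of a star, then every nonzero zero
divisor has annihilator `ann f` or `ann (1 - f)`. -/
lemma key {R : Type*} [CommRing R] {f : R} (hidem : f * f = f) (hf0 : f ≠ 0)
    {c : GammaEV R} (hc : ∀ x : ZD R, cls R x = c ↔ ann R x.1 = ann R f)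
    (hcenter : ∀ v : GammaEV R, v ≠ c → (gammaE R).Adj c v) :
    ∀ x : ZD R, ann R x.1 = ann R f ∨ ann R x.1 = ann R (1 - f) := by
  have step1 : ∀ x : ZD R, cls R x ≠ c → f * x.1 = 0 := by
    intro x hx
    obtain ⟨-, a, b, ha, hb, hab⟩ := hcenter (cls R x) hx
    have haf : ann R a.1 = ann R f := (hc a).mp ha
    have hbx : ann R b.1 = ann R x.1 := cls_eq_iff.mp hb
    have hb1 : b.1 ∈ ann R a.1 := mem_ann_iff.mpr (by rw [mul_comm]; exact hab)
    rw [haf] at hb1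
    have hfb : f ∈ ann R b.1 := mem_ann_iff.mpr (by rw [mul_comm]; exact mem_ann_iff.mp hb1)
    rw [hbx] at hfb
    exact mem_ann_iff.mp hfb
  have step1' : ∀ x : ZD R, ann R x.1 ≠ ann R f → f * x.1 = 0 := fun x h =>
    step1 x (fun hcE => h ((hc x).mp hcE))
  have Afact : ∀ u v : R, u ≠ 0 → v ≠ 0 → f * u = u → f * v = v → u * v ≠ 0 := by
    intro u v hu hv hfu hfv huv
    by_cases h : ann R u = ann R f
    · have hvf : v * f = 0 := mem_ann_iff.mp (h ▸ mem_ann_iff.mpr (by rw [mul_comm]; exact huv))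
      exact hv (by rw [← hfv, mul_comm]; exact hvf)
    · have := step1' ⟨u, hu, v, hv, huv⟩ h
      exact hu (by rw [← hfu]; exact this)
  have Bfact : ∀ z y : R, z ≠ 0 → y ≠ 0 → f * z = 0 → f * y = 0 → z * y ≠ 0 := by
    intro z y hz hy hfz hfy hzy
    have hfw : f * (f + z) = f := by rw [mul_add, hidem, hfz, add_zero]
    have hw0 : f + z ≠ 0 := fun h => hf0 (by rw [← hfw, h, mul_zero])
    have hwy : (f + z) * y = 0 := by rw [add_mul, hzy, hfy, add_zero]
    have hWne : ann R (f + z) ≠ ann R f := by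
      intro h
      have h1 : (1 - f) ∈ ann R f := mem_ann_iff.mpr (by linear_combination -hidem)
      rw [← h] at h1
      have h2 : (1 - f) * (f + z) = 0 := mem_ann_iff.mp h1
      exact hz (by linear_combination h2 + hidem + hfz)
    have := step1' ⟨f + z, hw0, y, hy, hwy⟩ hWne
    rw [hfw] at this
    exact hf0 this
  rintro ⟨x, hx0, y, hy0, hxy⟩
  simp only
  have hysplit : f * y ≠ 0 ∨ (1 - f) * y ≠ 0 := by
    by_contra h
    push_neg at h
    exact hy0 (by linear_combination h.1 + h.2)
  rcases hysplit with hy1 | hy2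
  · have hx1 : f * x = 0 := by
      by_contra hx1
      exact Afact (f * x) (f * y) hx1 hy1 (by rw [← mul_assoc, hidem])
        (by rw [← mul_assoc, hidem]) (by linear_combination (f * f) * hxy)
    right
    ext t
    simp only [mem_ann_iff]
    constructor
    · intro ht
      have hxt2 : x * ((1 - f) * t) = 0 := by linear_combination (1 - f) * ht
      have hft2 : f * ((1 - f) * t) = 0 := by linear_combination (-t) * hidem
      have ht2 : (1 - f) * t = 0 := by
        by_contra h
        exact Bfact x ((1 - f) * t) hx0 h hx1 hft2 hxt2
      linear_combination ht2
    · intro ht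
      linear_combination x * ht + t * hx1
  · have hx2 : (1 - f) * x = 0 := by
      by_contra hx2
      exact Bfact ((1 - f) * x) ((1 - f) * y) hx2 hy2 (by linear_combination (-x) * hidem)
        (by linear_combination (-y) * hidem) (by linear_combination ((1 - f) * (1 - f)) * hxy)
    have hfx : f * x = x := by linear_combination -hx2
    left
    ext t
    simp only [mem_ann_iff]
    constructor
    · intro ht
      have hxt1 : x * (f * t) = 0 := by linear_combination f * ht
      have hft1 : f * (f * t) = f * t := by linear_combination t * hidem
      have : f * t = 0 := by
        by_contra h
        exact Afact x (f * t) hx0 h hfx hft1 hxt1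
      linear_combination this
    · intro ht
      linear_combination x * ht - t * hfx

theorem stmt12 (R : Type*) [CommRing R] [Finite R]
    (hcard : 4 ≤ (Set.univ : Set (GammaEV R)).encard)
    (c : GammaEV R)
    (hcenter : ∀ v : GammaEV R, v ≠ c → (gammaE R).Adj c v)
    (hindep : ∀ u v : GammaEV R, u ≠ c → v ≠ c → ¬ (gammaE R).Adj u v) :
    IsLocalRing R := by
  rcases subsingleton_or_nontrivial R with hsub | hnt
  · exfalso
    haveI hZD : IsEmpty (ZD R) := ⟨fun x => x.2.1 (Subsingleton.elim _ _)⟩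
    haveI : IsEmpty (GammaEV R) := Function.isEmpty (fun v : GammaEV R => Quotient.out v)
    rw [Set.univ_eq_empty_iff.mpr ‹_›, Set.encard_empty] at hcard
    exact absurd hcard (by norm_num)
  apply IsLocalRing.of_isUnit_or_isUnit_one_sub_self
  intro a
  by_contra hcon
  push_neg at hcon
  obtain ⟨ha, hb⟩ := hcon
  have hnotnil : ¬ IsNilpotent a := fun hn => hb hn.isUnit_one_sub
  obtain ⟨n, hn1, hidem⟩ := exists_idem_pow a
  set f := a ^ n with hf
  clear_value f
  have hf0 : f ≠ 0 := fun h => hnotnil ⟨n, by rw [← hf]; exact h⟩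
  have hf1 : f ≠ 1 := by
    intro h
    apply ha
    refine IsUnit.of_mul_eq_one (a := a) (a ^ (n - 1)) ?_
    rw [← pow_succ', show n - 1 + 1 = n from by omega, ← hf, h]
  have hsubf : (1 : R) - f ≠ 0 := sub_ne_zero.mpr (Ne.symm hf1)
  have hmul : f * (1 - f) = 0 := by linear_combination -hidem
  set F : ZD R := ⟨f, hf0, 1 - f, hsubf, hmul⟩ with hF
  set F' : ZD R := ⟨1 - f, hsubf, f, hf0, by rw [mul_comm]; exact hmul⟩ with hF'
  have hFne : cls R F ≠ cls R F' := by
    intro h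
    have h' : ann R f = ann R (1 - f) := cls_eq_iff.mp h
    have h1 : f ∈ ann R (1 - f) := mem_ann_iff.mpr hmul
    rw [← h'] at h1
    exact hf0 (by rw [← hidem]; exact mem_ann_iff.mp h1)
  have hcc : c = cls R F ∨ c = cls R F' := by
    by_contra h
    push_neg at h
    exact hindep (cls R F) (cls R F') (fun hh => h.1 hh.symm) (fun hh => h.2 hh.symm)
      ⟨hFne, F, F', rfl, rfl, hmul⟩
  have hidem' : (1 - f) * (1 - f) = 1 - f := by linear_combination hidem
  have hclassify : ∀ x : ZD R, ann R x.1 = ann R f ∨ ann R x.1 = ann R (1 - f) := by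
    rcases hcc with hc | hc
    · exact key hidem hf0 (fun x => by rw [hc]; exact cls_eq_iff) hcenter
    · have := key hidem' hsubf (fun x => by rw [hc]; exact cls_eq_iff) hcenter
      intro x
      rcases this x with h | h
      · exact Or.inr h
      · left; rwa [sub_sub_cancel] at h
  have hsubset : (Set.univ : Set (GammaEV R)) ⊆ {cls R F, cls R F'} := by
    intro v _
    obtain ⟨x, rfl⟩ := Quotient.exists_rep v
    rcases hclassify x with h | h
    · exact Set.mem_insert_iff.mpr (Or.inl (cls_eq_iff.mpr h))
    · exact Set.mem_insert_iff.mpr (Or.inr (cls_eq_iff.mpr h))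
  have h2 : ({cls R F, cls R F'} : Set (GammaEV R)).encard ≤ 2 := by
    calc ({cls R F, cls R F'} : Set (GammaEV R)).encard
        ≤ ({cls R F'} : Set (GammaEV R)).encard + 1 := Set.encard_insert_le _ _
      _ = 2 := by rw [Set.encard_singleton]; rfl
  have := hcard.trans ((Set.encard_mono hsubset).trans h2)
  exact absurd this (by norm_num)
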